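/- Let ρ, u : ℝ → ℝ with u ∈ H¹(ℝ), ρ - ρ̃ ∈ L²(ℝ) for a constant ρ̃ > 0, and ρ ≥ 0. Then there is a constant C depending only on ρ̃ and ‖ρ - ρ̃‖_{L²} such that ‖u‖²_{L²} ≤ C(1 + ‖√ρ · u‖²_{L²} + ‖u'‖²_{L²}). -/

import Mathlib

open MeasureTheory Real Filter Set Topology


lemma myL2norm_eq {f : ℝ → ℝ} (hf : MemLp f 2 (volume : Measure ℝ)) :
    (eLpNorm f 2 (volume : Measure ℝ)).toReal
      = (∫ x, |f x| ^ (2:ℝ)) ^ ((2:ℝ)⁻¹) := by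
  rw [hf.eLpNorm_eq_integral_rpow_norm two_ne_zero ENNReal.ofNat_ne_top,
    ENNReal.toReal_ofReal (by positivity)]
  norm_num [Real.norm_eq_abs]

lemma myL2norm_sq {f : ℝ → ℝ} (hf : MemLp f 2 (volume : Measure ℝ)) :
    (eLpNorm f 2 (volume : Measure ℝ)).toReal ^ 2 = ∫ x, f x ^ 2 := by
  have hI : 0 ≤ ∫ x, |f x| ^ (2:ℝ) := integral_nonneg fun x => by positivity
  rw [myL2norm_eq hf, ← Real.rpow_natCast (_ ^ ((2:ℝ)⁻¹)) 2, ← Real.rpow_mul hI]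
  rw [show ((2:ℝ)⁻¹ * ((2:ℕ):ℝ)) = 1 by norm_num, Real.rpow_one]
  exact integral_congr_ae (ae_of_all _ fun x => by
    norm_num [show ((2:ℝ)) = ((2:ℕ):ℝ) from by norm_num, Real.rpow_natCast, sq_abs])

lemma myCS {f g : ℝ → ℝ} (hf : MemLp f 2 (volume : Measure ℝ))
    (hg : MemLp g 2 (volume : Measure ℝ)) :
    ∫ x, |f x * g x| ≤ (eLpNorm f 2 (volume : Measure ℝ)).toReal
      * (eLpNorm g 2 (volume : Measure ℝ)).toReal := by
  have h2 : ((2:ENNReal)) = ENNReal.ofReal (2:ℝ) := by norm_num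
  have hcj : Real.HolderConjugate 2 2 :=
    (Real.holderConjugate_iff_eq_conjExponent (by norm_num)).mpr (by norm_num)
  have key := integral_mul_le_Lp_mul_Lq_of_nonneg hcj
    (ae_of_all _ fun x => abs_nonneg (f x)) (ae_of_all _ fun x => abs_nonneg (g x))
    (h2 ▸ hf.abs) (h2 ▸ hg.abs)
  calc ∫ x, |f x * g x| = ∫ x, |f x| * |g x| := by simp [abs_mul]
    _ ≤ (∫ x, |f x| ^ (2:ℝ)) ^ ((1:ℝ)/2) * (∫ x, |g x| ^ (2:ℝ)) ^ ((1:ℝ)/2) := key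
    _ = _ := by rw [myL2norm_eq hf, myL2norm_eq hg]; norm_num


lemma mySup {u : ℝ → ℝ} (hud : Differentiable ℝ u) (hu2 : MemLp u 2 (volume : Measure ℝ))
    (hu'2 : MemLp (deriv u) 2 (volume : Measure ℝ)) (x : ℝ) :
    u x ^ 2 ≤ 2 * (eLpNorm u 2 (volume : Measure ℝ)).toReal
      * (eLpNorm (deriv u) 2 (volume : Measure ℝ)).toReal := by
  set N := (eLpNorm u 2 (volume : Measure ℝ)).toReal with hN
  set D := (eLpNorm (deriv u) 2 (volume : Measure ℝ)).toReal with hD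
  have hmul : Integrable (fun y => u y * deriv u y) volume := by
    have h := (hu'2.smul hu2 (p := 2) (q := 2) (r := 1) (hpqr := ⟨by rw [inv_one]; exact ENNReal.inv_two_add_inv_two⟩) :
      MemLp (u • deriv u) 1 (volume : Measure ℝ))
    exact memLp_one_iff_integrable.mp h
  have habs : ∫ y, |u y * deriv u y| ≤ N * D := myCS hu2 hu'2
  have hh : Integrable (fun y => 2 * (u y * deriv u y)) volume := hmul.const_mul 2
  have hftc : ∀ a : ℝ, ∫ y in a..x, 2 * (u y * deriv u y) = u x ^ 2 - u a ^ 2 := by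
    intro a
    apply intervalIntegral.integral_eq_sub_of_hasDerivAt
    · intro t _
      simpa [pow_one, mul_assoc] using (hud t).hasDerivAt.fun_pow 2
    · exact hh.intervalIntegrable
  set I := ∫ y in Iic x, 2 * (u y * deriv u y) with hI
  have hlim : Tendsto (fun a => u a ^ 2) atBot (𝓝 (u x ^ 2 - I)) := by
    have h1 : Tendsto (fun a => ∫ y in a..x, 2 * (u y * deriv u y)) atBot (𝓝 I) :=
      intervalIntegral_tendsto_integral_Iic x hh.integrableOn tendsto_id
    have heq : (fun a => u a ^ 2) = fun a => u x ^ 2 - ∫ y in a..x, 2 * (u y * deriv u y) := by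
      funext a; rw [hftc a]; ring
    rw [heq]
    exact tendsto_const_nhds.sub h1
  set ℓ := u x ^ 2 - I with hℓ
  have hℓ0 : ℓ ≤ 0 := by
    by_contra hcon
    push_neg at hcon
    have hev : ∀ᶠ a in atBot, ℓ/2 ≤ u a ^ 2 :=
      hlim.eventually (eventually_ge_nhds (by linarith))
    obtain ⟨A, hA⟩ := eventually_atBot.mp hev
    have hint : IntegrableOn (fun y => u y ^ 2) (Iic A) volume :=
      hu2.integrable_sq.integrableOn
    have hconst : Integrable (fun _ : ℝ => ℓ/2) (volume.restrict (Iic A)) := by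
      apply Integrable.mono' hint aestronglyMeasurable_const
      rw [ae_restrict_iff' measurableSet_Iic]
      exact ae_of_all _ fun a ha => by
        rw [Real.norm_eq_abs, abs_of_nonneg (by linarith)]
        exact hA a ha
    rw [integrable_const_iff] at hconst
    rcases hconst with h0 | hfin
    · linarith
    · simp [isFiniteMeasure_restrict, Real.volume_Iic] at hfin
  have h1 : I ≤ ∫ y in Iic x, |2 * (u y * deriv u y)| :=
    integral_mono hh.integrableOn hh.abs.integrableOn (fun y => le_abs_self _)
  have h2 : ∫ y in Iic x, |2 * (u y * deriv u y)| ≤ ∫ y, |2 * (u y * deriv u y)| :=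
    setIntegral_le_integral hh.abs (ae_of_all _ fun y => abs_nonneg _)
  have h3 : ∫ y, |2 * (u y * deriv u y)| = 2 * ∫ y, |u y * deriv u y| := by
    simp_rw [abs_mul, abs_two]
    exact integral_const_mul 2 _
  have : u x ^ 2 = ℓ + I := by rw [hℓ]; ring
  nlinarith [habs, h1, h2]

lemma young {x y ε : ℝ} (hε : 0 < ε) : x*y ≤ ε*x^2 + y^2/(4*ε) := by
  rw [← sub_nonneg]
  have h : ε*x^2 + y^2/(4*ε) - x*y = (2*ε*x - y)^2 / (4*ε) := by field_simp; ring
  rw [h]; positivity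

lemma myArith (ρt M N S D : ℝ) (hρt : 0 < ρt) (hM : 0 ≤ M) (hN0 : 0 ≤ N) (hD0 : 0 ≤ D)
    (hS0 : 0 ≤ S) (T : ℝ) (hT0 : 0 ≤ T)
    (hmain : ρt * N^2 ≤ S^2 + M * T) (hT2 : T^2 ≤ 2*N*D*N^2) :
    N^2 ≤ (2/ρt + 8*(M+1)^4/ρt^4 + 1) * (1 + S^2 + D^2) := by
  set P := Real.sqrt N with hP
  set Q := Real.sqrt D with hQ
  set s2 := Real.sqrt 2 with hs2
  have hP2 : P^2 = N := Real.sq_sqrt hN0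
  have hQ2 : Q^2 = D := Real.sq_sqrt hD0
  have hs22 : s2^2 = 2 := Real.sq_sqrt (by norm_num)
  have hPn : 0 ≤ P := Real.sqrt_nonneg _
  have hQn : 0 ≤ Q := Real.sqrt_nonneg _
  have hs2n : 0 ≤ s2 := Real.sqrt_nonneg _
  -- T ≤ s2 * N * P * Q
  have hTle : T ≤ s2 * N * P * Q := by
    have h1 : T = Real.sqrt (T^2) := (Real.sqrt_sq hT0).symm
    have h2 : (s2*N*P*Q)^2 = 2*N*D*N^2 := by
      have : (s2*N*P*Q)^2 = s2^2 * P^2 * Q^2 * N^2 := by ring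
      rw [this, hP2, hQ2, hs22]
    rw [h1, ← Real.sqrt_sq (by positivity : 0 ≤ s2*N*P*Q)]
    exact Real.sqrt_le_sqrt (by linarith)
  have hMT : M * T ≤ (M+1) * (s2*N*P*Q) := by
    have := mul_le_mul_of_nonneg_left hTle (by linarith : (0:ℝ) ≤ M+1)
    nlinarith [mul_nonneg (mul_nonneg (mul_nonneg hs2n hN0) hPn) hQn]
  -- Young step 1
  have hy1 : (M+1) * (s2*N*P*Q) ≤ (ρt/4)*N^2 + (2*(M+1)^2/ρt)*(N*D) := by
    have h := young (x := N) (y := (M+1)*(s2*P*Q)) (show (0:ℝ) < ρt/4 by linarith)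
    have he : ((M+1)*(s2*P*Q))^2 = (M+1)^2 * (s2^2 * P^2 * Q^2) := by ring
    have he2 : ((M+1)*(s2*P*Q))^2 = 2*(M+1)^2*(N*D) := by rw [he, hP2, hQ2, hs22]; ring
    calc (M+1) * (s2*N*P*Q) = N * ((M+1)*(s2*P*Q)) := by ring
      _ ≤ (ρt/4)*N^2 + ((M+1)*(s2*P*Q))^2/(4*(ρt/4)) := h
      _ = (ρt/4)*N^2 + (2*(M+1)^2/ρt)*(N*D) := by rw [he2]; field_simp
  -- Young step 2
  have hy2 : (2*(M+1)^2/ρt)*(N*D) ≤ (ρt/4)*N^2 + (4*(M+1)^4/ρt^3)*D^2 := by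
    have h := young (x := N) (y := (2*(M+1)^2/ρt)*D) (show (0:ℝ) < ρt/4 by linarith)
    calc (2*(M+1)^2/ρt)*(N*D) = N * ((2*(M+1)^2/ρt)*D) := by ring
      _ ≤ (ρt/4)*N^2 + ((2*(M+1)^2/ρt)*D)^2/(4*(ρt/4)) := h
      _ = (ρt/4)*N^2 + (4*(M+1)^4/ρt^3)*D^2 := by field_simp; ring
  have hfin : (ρt/2) * N^2 ≤ S^2 + (4*(M+1)^4/ρt^3)*D^2 := by linarith
  have hfin2 : N^2 ≤ (2/ρt)*S^2 + (8*(M+1)^4/ρt^4)*D^2 := by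
    have h := mul_le_mul_of_nonneg_left hfin (by positivity : (0:ℝ) ≤ 2/ρt)
    have e1 : (2/ρt) * ((ρt/2)*N^2) = N^2 := by field_simp
    have e2 : (2/ρt) * (S^2 + (4*(M+1)^4/ρt^3)*D^2) = (2/ρt)*S^2 + (8*(M+1)^4/ρt^4)*D^2 := by
      field_simp; ring
    rw [e1, e2] at h; exact h
  have ha : (0:ℝ) ≤ 2/ρt := by positivity
  have hb : (0:ℝ) ≤ 8*(M+1)^4/ρt^4 := by positivity
  nlinarith [mul_nonneg ha (sq_nonneg D), mul_nonneg hb (sq_nonneg S), sq_nonneg S, sq_nonneg D,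
    mul_nonneg ha (sq_nonneg S), mul_nonneg hb (sq_nonneg D)]

theorem stmt9 (ρt M : ℝ) (hρt : 0 < ρt) (hM : 0 ≤ M) :
    ∃ C : ℝ, 0 < C ∧ ∀ (ρ u : ℝ → ℝ),
      (∀ x, 0 ≤ ρ x) →
      MemLp (fun x => ρ x - ρt) 2 (volume : Measure ℝ) →
      eLpNorm (fun x => ρ x - ρt) 2 (volume : Measure ℝ) ≤ ENNReal.ofReal M →
      Differentiable ℝ u →
      MemLp u 2 (volume : Measure ℝ) →
      MemLp (deriv u) 2 (volume : Measure ℝ) →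
      (eLpNorm u 2 (volume : Measure ℝ)).toReal ^ 2 ≤
        C * (1 + (eLpNorm (fun x => Real.sqrt (ρ x) * u x) 2 (volume : Measure ℝ)).toReal ^ 2
               + (eLpNorm (deriv u) 2 (volume : Measure ℝ)).toReal ^ 2) := by
  refine ⟨2/ρt + 8*(M+1)^4/ρt^4 + 1, by positivity, ?_⟩
  intro ρ u hρ0 hρ2 hρM hud hu2 hu'2
  set N := (eLpNorm u 2 (volume : Measure ℝ)).toReal with hNdef
  set D := (eLpNorm (deriv u) 2 (volume : Measure ℝ)).toReal with hDdef
  set S := (eLpNorm (fun x => Real.sqrt (ρ x) * u x) 2 (volume : Measure ℝ)).toReal with hSdef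
  have hN0 : 0 ≤ N := ENNReal.toReal_nonneg
  have hD0 : 0 ≤ D := ENNReal.toReal_nonneg
  have hsup : ∀ x, u x ^ 2 ≤ 2 * N * D := mySup hud hu2 hu'2
  have hub : MemLp u ⊤ (volume : Measure ℝ) := by
    apply memLp_top_of_bound hu2.1 (Real.sqrt (2*N*D))
    exact ae_of_all _ fun x => by
      rw [Real.norm_eq_abs, ← Real.sqrt_sq_eq_abs]
      exact Real.sqrt_le_sqrt (hsup x)
  have husq : MemLp (fun x => u x ^ 2) 2 (volume : Measure ℝ) := by
    have h : MemLp (u • u) 2 (volume : Measure ℝ) := hu2.smul hub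
    exact h.ae_eq (ae_of_all _ fun x => (sq (u x)).symm)
  have hu2int : Integrable (fun x => u x ^ 2) (volume : Measure ℝ) := hu2.integrable_sq
  have hu4int : Integrable (fun x => (u x ^ 2) ^ 2) (volume : Measure ℝ) := husq.integrable_sq
  have hcross : Integrable (fun x => (ρ x - ρt) * u x ^ 2) (volume : Measure ℝ) := by
    have h : MemLp ((fun x => ρ x - ρt) • (fun x => u x ^ 2)) 1 (volume : Measure ℝ) :=
      husq.smul hρ2 (hpqr := ⟨by rw [inv_one]; exact ENNReal.inv_two_add_inv_two⟩)
    exact memLp_one_iff_integrable.mp h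
  have hρu2int : Integrable (fun x => ρ x * u x ^ 2) (volume : Measure ℝ) := by
    have he : (fun x => ρ x * u x ^ 2)
        = fun x => (ρ x - ρt) * u x ^ 2 + ρt * u x ^ 2 := by funext x; ring
    rw [he]; exact hcross.add (hu2int.const_mul ρt)
  have hsm : AEStronglyMeasurable (fun x => Real.sqrt (ρ x) * u x) (volume : Measure ℝ) := by
    have hρm : AEMeasurable ρ (volume : Measure ℝ) := by
      have h1 := hρ2.1.aemeasurable
      have h2 : AEMeasurable (fun x => (ρ x - ρt) + ρt) (volume : Measure ℝ) :=
        h1.add_const ρt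
      simpa using h2
    exact ((Real.continuous_sqrt.measurable.comp_aemeasurable hρm).aestronglyMeasurable).mul hu2.1
  have hsqu : MemLp (fun x => Real.sqrt (ρ x) * u x) 2 (volume : Measure ℝ) := by
    rw [memLp_two_iff_integrable_sq hsm]
    have he : (fun x => (Real.sqrt (ρ x) * u x) ^ 2) = fun x => ρ x * u x ^ 2 := by
      funext x; rw [mul_pow, Real.sq_sqrt (hρ0 x)]
    rw [he]; exact hρu2int
  have hNsq : N ^ 2 = ∫ x, u x ^ 2 := myL2norm_sq hu2
  have hSsq : S ^ 2 = ∫ x, ρ x * u x ^ 2 := by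
    rw [hSdef, myL2norm_sq hsqu]
    exact integral_congr_ae (ae_of_all _ fun x => by
      show (Real.sqrt (ρ x) * u x) ^ 2 = ρ x * u x ^ 2
      rw [mul_pow, Real.sq_sqrt (hρ0 x)])
  set T := (eLpNorm (fun x => u x ^ 2) 2 (volume : Measure ℝ)).toReal with hTdef
  have hT0 : 0 ≤ T := ENNReal.toReal_nonneg
  have hS0 : 0 ≤ S := ENNReal.toReal_nonneg
  -- split
  have hneg : Integrable (fun x => (ρt - ρ x) * u x ^ 2) (volume : Measure ℝ) := by
    have he : (fun x => (ρt - ρ x) * u x ^ 2) = fun x => -((ρ x - ρt) * u x ^ 2) := by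
      funext x; ring
    rw [he]; exact hcross.neg
  have hsplit : ρt * N ^ 2 = S ^ 2 + ∫ x, (ρt - ρ x) * u x ^ 2 := by
    rw [hNsq, hSsq, ← integral_const_mul, ← integral_add hρu2int hneg]
    exact integral_congr_ae (ae_of_all _ fun x => by ring)
  have hMle : (eLpNorm (fun x => ρ x - ρt) 2 (volume : Measure ℝ)).toReal ≤ M :=
    ENNReal.toReal_le_of_le_ofReal hM hρM
  have hcs : ∫ x, (ρt - ρ x) * u x ^ 2 ≤ M * T := by
    calc ∫ x, (ρt - ρ x) * u x ^ 2 ≤ |∫ x, (ρt - ρ x) * u x ^ 2| := le_abs_self _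
      _ ≤ ∫ x, |(ρt - ρ x) * u x ^ 2| := by
          exact abs_integral_le_integral_abs
            (f := fun x => (ρt - ρ x) * u x ^ 2) (μ := (volume : Measure ℝ))
      _ = ∫ x, |(ρ x - ρt) * u x ^ 2| := by
          exact integral_congr_ae (ae_of_all _ fun x => by
            show |(ρt - ρ x) * u x ^ 2| = |(ρ x - ρt) * u x ^ 2|
            rw [abs_mul, abs_mul, abs_sub_comm])
      _ ≤ (eLpNorm (fun x => ρ x - ρt) 2 (volume : Measure ℝ)).toReal * T := myCS hρ2 husq
      _ ≤ M * T := mul_le_mul_of_nonneg_right hMle hT0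
  have hmain : ρt * N ^ 2 ≤ S ^ 2 + M * T := by rw [hsplit]; linarith
  have hTsq : T ^ 2 = ∫ x, (u x ^ 2) ^ 2 := myL2norm_sq husq
  have hT2 : T ^ 2 ≤ 2 * N * D * N ^ 2 := by
    rw [hTsq]
    calc ∫ x, (u x ^ 2) ^ 2 ≤ ∫ x, (2 * N * D) * u x ^ 2 := by
          apply integral_mono hu4int (hu2int.const_mul _)
          intro x
          show (u x ^ 2) ^ 2 ≤ 2 * N * D * u x ^ 2
          have h := hsup x
          nlinarith [sq_nonneg (u x)]
      _ = 2 * N * D * ∫ x, u x ^ 2 := integral_const_mul _ _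
      _ = 2 * N * D * N ^ 2 := by rw [← hNsq]
  exact myArith ρt M N S D hρt hM hN0 hD0 hS0 T hT0 hmain hT2
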